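/- arXiv:1805.11342 — 3 statements merged into one kernel-verified Lean document; each statement's English description precedes it below -/
import Mathlib

section
/- For every functional G : (ℕ → ℕ) → ℕ, there exist finitely many functions f₁, …, f_k : ℕ → ℕ with fᵢ(n) ≤ 1 for all n, such that for every f : ℕ → ℕ with f(n) ≤ 1 for all n there is some i ≤ k with f(j) = fᵢ(j) for all j < G(fᵢ). -/
/-- HBU_c: Heine–Borel compactness of Cantor space for canonical covers.
For every `G : (ℕ → ℕ) → ℕ` there are finitely many binary sequences `f₁, …, f_k`
such that every binary sequence `g` agrees with some `fᵢ` on all `j < G fᵢ`. -/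
theorem HBUc (G : (ℕ → ℕ) → ℕ) :
    ∃ (k : ℕ) (f : Fin k → (ℕ → ℕ)), (∀ i, ∀ n, f i n ≤ 1) ∧
      ∀ g : ℕ → ℕ, (∀ n, g n ≤ 1) → ∃ i, ∀ j < G (f i), g j = f i j := by
  set C : Set (ℕ → ℕ) := Set.pi Set.univ (fun _ => Set.Iic 1) with hC
  have hCcomp : IsCompact C := isCompact_univ_pi (fun _ => (Set.finite_Iic 1).isCompact)
  set U : {f : ℕ → ℕ // ∀ n, f n ≤ 1} → Set (ℕ → ℕ) :=
    fun f => {g | ∀ j < G f.1, g j = f.1 j} with hU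
  have hopen : ∀ f, IsOpen (U f) := by
    intro f
    have : U f = ⋂ j ∈ Finset.range (G f.1), (fun g : ℕ → ℕ => g j) ⁻¹' {f.1 j} := by
      ext g; simp [hU]
    rw [this]
    exact isOpen_biInter_finset fun j _ =>
      (continuous_apply j).isOpen_preimage _ (isOpen_discrete _)
  have hcover : C ⊆ ⋃ f, U f := by
    intro g hg
    exact Set.mem_iUnion.2 ⟨⟨g, fun n => hg n (Set.mem_univ n)⟩, fun j _ => rfl⟩
  obtain ⟨t, ht⟩ := hCcomp.elim_finite_subcover U hopen hcover
  refine ⟨t.card, fun i => (t.equivFin.symm i).1.1, fun i n => (t.equivFin.symm i).1.2 n, ?_⟩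
  intro g hg
  have hgC : g ∈ C := fun n _ => hg n
  obtain ⟨f, hf, hgf⟩ := Set.mem_iUnion₂.1 (ht hgC)
  exact ⟨t.equivFin ⟨f, hf⟩, by simpa [hU] using hgf⟩
end

section
/- Let T be a set of finite binary sequences (lists of Booleans) that is closed under initial segments, and suppose there exists a rational c > 0 such that for every n ∈ ℕ the number of sequences in T of length n is at least c · 2ⁿ. Then T has an infinite path, i.e., there exists f : ℕ → Bool such that for every n the length-n initial segment (f(0), …, f(n−1)) belongs to T. -/
/-- WWKL: weak weak König's lemma. Every binary tree (set of finite boolean sequences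
closed under initial segments) of positive measure has an infinite path. -/
theorem WWKL (T : Set (List Bool))
    (hT : ∀ l₁ l₂ : List Bool, l₁ <+: l₂ → l₂ ∈ T → l₁ ∈ T)
    (hpos : ∃ c : ℚ, 0 < c ∧ ∀ n : ℕ,
      c * 2 ^ n ≤ (Set.ncard {l : List Bool | l ∈ T ∧ l.length = n} : ℚ)) :
    ∃ f : ℕ → Bool, ∀ n : ℕ, (List.ofFn fun i : Fin n => f i) ∈ T := by
  classical
  obtain ⟨c, hc, hlev⟩ := hpos
  -- each level is nonempty
  have hne : ∀ n : ℕ, ∃ l : List Bool, l ∈ T ∧ l.length = n := by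
    intro n
    by_contra h
    push_neg at h
    have : {l : List Bool | l ∈ T ∧ l.length = n} = ∅ := by
      ext l; simp only [Set.mem_setOf_eq, Set.mem_empty_iff_false, iff_false]
      intro hl; exact h l hl.1 hl.2
    have h0 := hlev n
    rw [this, Set.ncard_empty] at h0
    have : (0:ℚ) < c * 2 ^ n := by positivity
    push_cast at h0
    linarith
  -- the sets C n
  set C : ℕ → Set (ℕ → Bool) := fun n => {f | (List.ofFn fun i : Fin n => f i) ∈ T} with hC
  have hsub : ∀ n, C (n+1) ⊆ C n := by
    intro n f hf
    refine hT _ _ ?_ hf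
    refine ⟨[f n], ?_⟩
    rw [List.ofFn_succ', List.concat_eq_append]; rfl
  have hCne : ∀ n, (C n).Nonempty := by
    intro n
    obtain ⟨l, hl, hlen⟩ := hne n
    refine ⟨fun i => l.getD i false, ?_⟩
    have : (List.ofFn fun i : Fin n => l.getD i false) = l := by
      apply List.ext_getElem
      · simp [hlen]
      · intro i h1 h2
        simp only [List.getElem_ofFn]
        rw [List.getD_eq_getElem]
    show (List.ofFn fun i : Fin n => l.getD i false) ∈ T
    rw [this]; exact hl
  have hclosed : ∀ n, IsClosed (C n) := by
    intro n
    have hcont : Continuous fun f : ℕ → Bool => (fun i : Fin n => f i) := by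
      exact continuous_pi fun i => continuous_apply _
    have : C n = (fun f : ℕ → Bool => (fun i : Fin n => f i)) ⁻¹'
        {g : Fin n → Bool | List.ofFn g ∈ T} := rfl
    rw [this]
    exact (isClosed_discrete _).preimage hcont
  have hInter : (⋂ n, C n).Nonempty :=
    IsCompact.nonempty_iInter_of_sequence_nonempty_isCompact_isClosed C hsub hCne
      (hclosed 0).isCompact hclosed
  obtain ⟨f, hf⟩ := hInter
  exact ⟨f, fun n => Set.mem_iInter.mp hf n⟩
end

section
/- There exists a functional Φ : ((ℕ → ℕ) → ℕ) → ℕ such that for every Y : (ℕ → ℕ) → ℕ that is continuous with respect to the product topology on ℕ → ℕ (where ℕ is discrete), and for all f, g : ℕ → ℕ with f(n) ≤ 1 and g(n) ≤ 1 for all n, if f(i) = g(i) for all i < Φ(Y) then Y(f) = Y(g). -/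
open Classical

lemma fan_key (Y : (ℕ → ℕ) → ℕ) (hY : Continuous Y) :
    ∃ N : ℕ, ∀ f g : ℕ → ℕ, (∀ n, f n ≤ 1) → (∀ n, g n ≤ 1) →
      (∀ i < N, f i = g i) → Y f = Y g := by
  -- Cantor set is compact
  have hC : IsCompact {f : ℕ → ℕ | ∀ n, f n ≤ 1} := by
    have : {f : ℕ → ℕ | ∀ n, f n ≤ 1} = Set.univ.pi (fun _ => Set.Iic 1) := by
      ext f; simp [Set.mem_pi, Set.mem_Iic, Pi.le_def]
    rw [this]
    exact isCompact_univ_pi (fun i => (Set.finite_Iic 1).isCompact)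
  -- for each f, a cylinder around f on which Y is constant
  have key : ∀ f : ℕ → ℕ, ∃ n : ℕ, ∀ g : ℕ → ℕ, (∀ i < n, g i = f i) → Y g = Y f := by
    intro f
    have hopen : IsOpen (Y ⁻¹' {Y f}) := (isOpen_discrete _).preimage hY
    rcases isOpen_pi_iff.1 hopen f rfl with ⟨I, u, hu, hsub⟩
    refine ⟨(I.sup id) + 1, fun g hg => ?_⟩
    have : g ∈ (I : Set ℕ).pi u := by
      intro i hi
      have : g i = f i := hg i (Nat.lt_succ_of_le (Finset.le_sup (f := id) hi))
      rw [this]; exact (hu i hi).2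
    exact hsub this
  choose n hn using key
  -- cylinders are open
  have hUopen : ∀ f : ℕ → ℕ, IsOpen {g : ℕ → ℕ | ∀ i < n f, g i = f i} := by
    intro f
    have : {g : ℕ → ℕ | ∀ i < n f, g i = f i}
        = ⋂ i ∈ Finset.range (n f), (fun g : ℕ → ℕ => g i) ⁻¹' {f i} := by
      ext g; simp [Set.mem_iInter]
    rw [this]
    exact isOpen_biInter_finset fun i _ => (isOpen_discrete _).preimage (continuous_apply i)
  obtain ⟨t, ht⟩ := hC.elim_finite_subcover (fun f : ℕ → ℕ => {g | ∀ i < n f, g i = f i})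
    hUopen (fun f hf => Set.mem_iUnion.2 ⟨f, fun i _ => rfl⟩)
  refine ⟨t.sup n, fun f g hf hg hfg => ?_⟩
  obtain ⟨f₀, hf₀t, hf₀⟩ := Set.mem_iUnion₂.1 (ht hf)
  have hgU : g ∈ {h : ℕ → ℕ | ∀ i < n f₀, h i = f₀ i} := by
    intro i hi
    have hiN : i < t.sup n := lt_of_lt_of_le hi (Finset.le_sup hf₀t)
    rw [← hfg i hiN]; exact hf₀ i hi
  rw [hn f₀ f hf₀, hn f₀ g hgU]

/-- FF: the classical fan functional exists. There is `Φ` providing, for every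
continuous `Y : (ℕ → ℕ) → ℕ`, a modulus `Φ Y` of uniform continuity of `Y` on
Cantor space. -/
theorem FF :
    ∃ Φ : ((ℕ → ℕ) → ℕ) → ℕ, ∀ Y : (ℕ → ℕ) → ℕ, Continuous Y →
      ∀ f g : ℕ → ℕ, (∀ n, f n ≤ 1) → (∀ n, g n ≤ 1) →
        (∀ i < Φ Y, f i = g i) → Y f = Y g := by
  refine ⟨fun Y => if h : ∃ N : ℕ, ∀ f g : ℕ → ℕ, (∀ n, f n ≤ 1) → (∀ n, g n ≤ 1) →
      (∀ i < N, f i = g i) → Y f = Y g then h.choose else 0, fun Y hY f g hf hg hfg => ?_⟩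
  have h := fan_key Y hY
  simp only [dif_pos h] at hfg
  exact h.choose_spec f g hf hg hfg
end
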